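/- Let X : ∧²M_1 → M_2 and X^t : M_1 ⊗ M_2 → M_3 be the maps defined via Poincaré duality on M by X(θ_1∧θ_1')·θ_2 = (β_4^{-1}∘h_4)(θ_1∧θ_1'⊗θ_2) = θ_1'·X^t(θ_1⊗θ_2), where h is the modified nullhomotopy of Corollary 4.4. Then β_2(X(θ_1∧θ_1')) = 0 and β_3(X^t(θ_1⊗θ_2)) = 0 for all θ_1, θ_1' ∈ M_1 and θ_2 ∈ M_2. -/
import Mathlib


/-- Definition 4.5 and Proposition 4.6 (1),(2): Let
`X : ⋀²M₁ → M₂` and `Xᵗ : M₁ ⊗ M₂ → M₃` be defined via Poincaré duality on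
`M` by `X(θ₁∧θ₁')·θ₂ = (β₄⁻¹ ∘ h₄)(θ₁∧θ₁'⊗θ₂) = θ₁'·Xᵗ(θ₁⊗θ₂)`, where `h` is
the modified nullhomotopy of Corollary 4.4.  Then `β₂(X(θ₁∧θ₁')) = 0` and
`β₃(Xᵗ(θ₁⊗θ₂)) = 0`.

`X` is encoded as a bilinear alternating map, `Xᵗ` as a bilinear map, `h₄`
(restricted to `⋀²M₁ ⊗ M₂`) as a trilinear map alternating in the first two
arguments, with the vanishing properties of Corollary 4.4 as hypotheses. -/
theorem stmt17
    {R : Type*} [CommRing R]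
    {K1 K2 K3 M1 M2 M3 M4 : Type*}
    [AddCommGroup K1] [AddCommGroup K2] [AddCommGroup K3]
    [AddCommGroup M1] [AddCommGroup M2] [AddCommGroup M3] [AddCommGroup M4]
    [Module R K1] [Module R K2] [Module R K3]
    [Module R M1] [Module R M2] [Module R M3] [Module R M4]
    -- differentials of the Koszul complex K (K₀ = R) and of M (M₀ = R)
    (k1 : K1 →ₗ[R] R) (k2 : K2 →ₗ[R] K1) (k3 : K3 →ₗ[R] K2)
    (m1 : M1 →ₗ[R] R) (m2 : M2 →ₗ[R] M1) (m3 : M3 →ₗ[R] M2) (m4 : M4 →ₗ[R] M3)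
    -- graded multiplications on K and on M
    (kmul11 : K1 →ₗ[R] K1 →ₗ[R] K2) (kmul12 : K1 →ₗ[R] K2 →ₗ[R] K3)
    (mmul11 : M1 →ₗ[R] M1 →ₗ[R] M2) (mmul12 : M1 →ₗ[R] M2 →ₗ[R] M3)
    (mmul13 : M1 →ₗ[R] M3 →ₗ[R] M4) (mmul22 : M2 →ₗ[R] M2 →ₗ[R] M4)
    -- orientations [-]_K and [-]_M
    (ωK : K3 ≃ₗ[R] R) (ωM : M4 ≃ₗ[R] R)
    -- the comparison morphism α : K → M (α₀ = id_R)
    (α1 : K1 →ₗ[R] M1) (α2 : K2 →ₗ[R] M2) (α3 : K3 →ₗ[R] M3)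
    -- the duality map β : M → K[-1]
    (β1 : M1 →ₗ[R] R) (β2 : M2 →ₗ[R] K1) (β3 : M3 →ₗ[R] K2) (β4 : M4 →ₗ[R] K3)
    (X : M1 →ₗ[R] M1 →ₗ[R] M2) (Xt : M1 →ₗ[R] M2 →ₗ[R] M3)
    (h4 : M1 →ₗ[R] M1 →ₗ[R] M2 →ₗ[R] K3)
    -- defining property of X and Xᵗ via the duality pairings of M
    (hXdef : ∀ (θ θ' : M1) (θ2 : M2), β4 (mmul22 (X θ θ') θ2) = h4 θ θ' θ2)
    (hXtdef : ∀ (θ θ' : M1) (θ2 : M2),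
      mmul22 (X θ θ') θ2 = mmul13 θ' (Xt θ θ2))
    (hXalt : ∀ θ : M1, X θ θ = 0)
    (h4alt : ∀ (θ : M1) (θ2 : M2), h4 θ θ θ2 = 0)
    -- vanishing properties of the modified nullhomotopy h (Corollary 4.4)
    (hh4a : ∀ (θ : M1) (φ : K1) (θ2 : M2), h4 θ (α1 φ) θ2 = 0)
    (hh4a' : ∀ (θ : M1) (φ : K1) (θ2 : M2), h4 (α1 φ) θ θ2 = 0)
    (hh4b : ∀ (θ θ' : M1) (φ : K2), h4 θ θ' (α2 φ) = 0)
    (hh4c : ∀ (θ θ' : M1) (φ : K1), h4 θ θ' (mmul11 (α1 φ) θ) = 0)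
    (hh4d : ∀ (θ θ' θ'' : M1) (φ : K1),
      h4 θ θ' (mmul11 (α1 φ) θ'') + h4 θ'' θ' (mmul11 (α1 φ) θ) = 0)
    -- β₄ is an isomorphism; defining property of β₂, β₃
    (hβ4inj : Function.Injective β4)
    (hβ2 : ∀ (θ : M2) (φ : K2), ωK (kmul12 (β2 θ) φ) = - ωM (mmul22 θ (α2 φ)))
    (hβ3 : ∀ (θ : M3) (φ : K1), ωK (kmul12 φ (β3 θ)) = - ωM (mmul13 (α1 φ) θ))
    -- the Koszul pairing K₁ ⊗ K₂ → K₃ is perfect (nondegenerate)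
    (hKnd1 : ∀ x : K1, (∀ y : K2, kmul12 x y = 0) → x = 0)
    (hKnd2 : ∀ y : K2, (∀ x : K1, kmul12 x y = 0) → y = 0) :
    (∀ θ θ' : M1, β2 (X θ θ') = 0) ∧
    (∀ (θ : M1) (θ2 : M2), β3 (Xt θ θ2) = 0) := by
  constructor
  · intro θ θ'
    apply hKnd1
    intro φ
    have hz : mmul22 (X θ θ') (α2 φ) = 0 := by
      apply hβ4inj
      rw [hXdef, hh4b, map_zero]
    have := hβ2 (X θ θ') φ
    simp only [hz, map_zero, neg_zero] at this
    exact ωK.injective (by simpa using this)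
  · intro θ θ2
    apply hKnd2
    intro φ
    have hz : mmul13 (α1 φ) (Xt θ θ2) = 0 := by
      rw [← hXtdef]
      apply hβ4inj
      rw [hXdef, hh4a, map_zero]
    have := hβ3 (Xt θ θ2) φ
    simp only [hz, map_zero, neg_zero] at this
    exact ωK.injective (by simpa using this)
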